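/- Let P ∈ B(H) be a bounded idempotent. Define P1 ∈ B(R(P)^⊥, R(P)) by P1 y = P y for y ∈ R(P)^⊥, and Q1 ∈ B(R(I−P)^⊥, R(I−P)) by Q1 y = (I−P) y for y ∈ R(I−P)^⊥. Then, as subspaces of H, the kernel of P1* equals the kernel of Q1, and both equal R(P) ∩ R(P*); likewise the kernel of P1 equals the kernel of Q1*, and both equal N(P) ∩ N(P*). Consequently P_{N(P1*)} = P_{N(Q1)} and P_{N(P1)} = P_{N(Q1*)}. -/

import Mathlib

open ContinuousLinearMap

variable {H : Type*} [NormedAddCommGroup H] [InnerProductSpace ℂ H] [CompleteSpace H]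

theorem range_idem_eq_ker (P : H →L[ℂ] H) (hP : P * P = P) :
    LinearMap.range P.toLinearMap = LinearMap.ker (1 - P).toLinearMap := by
  ext x
  constructor
  · rintro ⟨y, rfl⟩
    have h : P (P y) = P y := by
      have := congrArg (fun T : H →L[ℂ] H => T y) hP
      simpa using this
    simp [LinearMap.mem_ker, h]
  · intro hx
    have h : x - P x = 0 := by simpa using hx
    exact ⟨x, (sub_eq_zero.mp h).symm⟩

/-- The range of a bounded idempotent is closed. -/
theorem isClosed_range_idem (P : H →L[ℂ] H) (hP : P * P = P) :
    IsClosed ((LinearMap.range P.toLinearMap : Submodule ℂ H) : Set H) := by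
  rw [range_idem_eq_ker P hP]
  exact ContinuousLinearMap.isClosed_ker _

theorem mul_one_sub_idem (P : H →L[ℂ] H) (hP : P * P = P) :
    (1 - P) * (1 - P) = 1 - P := by
  rw [sub_mul, mul_sub, mul_sub, one_mul, mul_one, hP]
  abel

/-- The corner `P1 ∈ B(R(P)^⊥, R(P))` of an idempotent `P`, given by `P1 y = P y`. -/
noncomputable def P1 (P : H →L[ℂ] H) :
    ((LinearMap.range P.toLinearMap)ᗮ : Submodule ℂ H) →L[ℂ] (LinearMap.range P.toLinearMap : Submodule ℂ H) :=
  ContinuousLinearMap.codRestrict (P ∘L ((LinearMap.range P.toLinearMap)ᗮ).subtypeL) (LinearMap.range P.toLinearMap)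
    (fun y => ⟨y, rfl⟩)

/-- The corresponding corner `Q1 ∈ B(R(I−P)^⊥, R(I−P))` of the idempotent `I − P`. -/
noncomputable def Q1 (P : H →L[ℂ] H) :
    ((LinearMap.range (1 - P).toLinearMap)ᗮ : Submodule ℂ H) →L[ℂ]
      (LinearMap.range (1 - P).toLinearMap : Submodule ℂ H) :=
  P1 (1 - P)

theorem adjoint_one_sub (P : H →L[ℂ] H) : adjoint (1 - P) = 1 - adjoint P := by
  have h1 : adjoint (1 : H →L[ℂ] H) = 1 := adjoint_id
  rw [map_sub, h1]

theorem mem_orth_range_iff (P : H →L[ℂ] H) (x : H) :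
    x ∈ (LinearMap.range P.toLinearMap)ᗮ ↔ adjoint P x = 0 := by
  simp only [Submodule.mem_orthogonal]
  constructor
  · intro h
    apply ext_inner_left ℂ
    intro y
    rw [adjoint_inner_right, inner_zero_right]
    exact h _ ⟨y, rfl⟩
  · rintro h u ⟨y, rfl⟩
    rw [ContinuousLinearMap.coe_coe, ← adjoint_inner_right, h, inner_zero_right]

theorem mem_range_idem_iff (P : H →L[ℂ] H) (hP : P * P = P) (x : H) :
    x ∈ LinearMap.range P.toLinearMap ↔ P x = x := by
  rw [range_idem_eq_ker P hP, LinearMap.mem_ker]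
  constructor
  · intro h
    have : x - P x = 0 := by simpa using h
    exact (sub_eq_zero.mp this).symm
  · intro h
    simp [h]

theorem adjoint_idem (P : H →L[ℂ] H) (hP : P * P = P) :
    adjoint P * adjoint P = adjoint P := by
  have := adjoint_comp P P
  rw [ContinuousLinearMap.mul_def] at hP ⊢
  rw [hP] at this
  exact this.symm

theorem P1_coe_apply (P : H →L[ℂ] H) (y : ((LinearMap.range P.toLinearMap)ᗮ : Submodule ℂ H)) :
    ((P1 P y : (LinearMap.range P.toLinearMap : Submodule ℂ H)) : H) = P y := rfl

theorem map_ker_P1 (P : H →L[ℂ] H) :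
    (LinearMap.ker (P1 P).toLinearMap).map ((LinearMap.range P.toLinearMap)ᗮ).subtype =
      LinearMap.ker P.toLinearMap ⊓ LinearMap.ker (adjoint P).toLinearMap := by
  ext x
  simp only [Submodule.mem_map, LinearMap.mem_ker, Submodule.mem_inf]
  constructor
  · rintro ⟨y, hy, rfl⟩
    have hy0 : P (y : H) = 0 := by
      have := congrArg (fun z : (LinearMap.range P.toLinearMap : Submodule ℂ H) => (z : H)) hy
      simpa [P1_coe_apply] using this
    exact ⟨hy0, (mem_orth_range_iff P _).mp y.2⟩
  · rintro ⟨h1, h2⟩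
    have hx : x ∈ (LinearMap.range P.toLinearMap)ᗮ := (mem_orth_range_iff P x).mpr h2
    refine ⟨⟨x, hx⟩, ?_, rfl⟩
    apply Subtype.ext
    simpa [P1_coe_apply] using h1

theorem map_ker_adjoint_P1 (P : H →L[ℂ] H) (hP : P * P = P)
    [CompleteSpace ↥(LinearMap.range P.toLinearMap)] :
    (LinearMap.ker (adjoint (P1 P)).toLinearMap).map (LinearMap.range P.toLinearMap).subtype =
      LinearMap.range P.toLinearMap ⊓ LinearMap.range (adjoint P).toLinearMap := by
  have hPs := adjoint_idem P hP
  have key : ∀ (w : (LinearMap.range P.toLinearMap : Submodule ℂ H))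
      (y : ((LinearMap.range P.toLinearMap)ᗮ : Submodule ℂ H)),
      (inner ℂ (adjoint (P1 P) w) y : ℂ) = inner ℂ (adjoint P (w : H)) (y : H) := by
    intro w y
    rw [adjoint_inner_left, Submodule.coe_inner, adjoint_inner_left]
    rfl
  ext x
  simp only [Submodule.mem_map, LinearMap.mem_ker, Submodule.mem_inf]
  constructor
  · rintro ⟨w, hker, rfl⟩
    refine ⟨w.2, ?_⟩
    have hmem : adjoint P (w : H) ∈ ((LinearMap.range P.toLinearMap)ᗮ)ᗮ := by
      rw [Submodule.mem_orthogonal']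
      intro u hu
      have := key w ⟨u, hu⟩
      rw [ContinuousLinearMap.coe_coe] at hker
      rw [hker, inner_zero_left] at this
      exact this.symm
    rw [Submodule.orthogonal_orthogonal] at hmem
    rw [mem_range_idem_iff _ hPs]
    set z := (w : H) - adjoint P (w : H) with hz
    have hzP : z ∈ LinearMap.range P.toLinearMap := sub_mem w.2 hmem
    have hzO : z ∈ (LinearMap.range P.toLinearMap)ᗮ := by
      rw [mem_orth_range_iff]
      have h2 : adjoint P (adjoint P (w : H)) = adjoint P (w : H) := by
        have := congrArg (fun T : H →L[ℂ] H => T (w : H)) hPs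
        simpa using this
      simp [hz, map_sub, h2]
    have hzz : (inner ℂ z z : ℂ) = 0 := Submodule.inner_right_of_mem_orthogonal hzP hzO
    have hz0 : z = 0 := inner_self_eq_zero.mp hzz
    exact (sub_eq_zero.mp hz0).symm
  · rintro ⟨hx, hxs⟩
    refine ⟨⟨x, hx⟩, ?_, rfl⟩
    have hfix : adjoint P x = x := (mem_range_idem_iff _ hPs x).mp hxs
    apply ext_inner_right ℂ
    intro y
    rw [inner_zero_left, ContinuousLinearMap.coe_coe, key ⟨x, hx⟩ y]
    show (inner ℂ (adjoint P x) (y : H) : ℂ) = 0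
    rw [hfix]
    exact Submodule.inner_right_of_mem_orthogonal hx y.2


/-- As subspaces of `H`: `N(P1*) = N(Q1) = R(P) ∩ R(P*)` and
`N(P1) = N(Q1*) = N(P) ∩ N(P*)`. -/
theorem ker_P1_Q1 (P : H →L[ℂ] H) (hP : P * P = P) :
    letI : CompleteSpace (LinearMap.range P.toLinearMap) := (isClosed_range_idem P hP).completeSpace_coe
    letI : CompleteSpace (LinearMap.range (1 - P).toLinearMap) :=
      (isClosed_range_idem (1 - P) (mul_one_sub_idem P hP)).completeSpace_coe
    ((LinearMap.ker (adjoint (P1 P)).toLinearMap).map (LinearMap.range P.toLinearMap).subtype =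
        (LinearMap.ker (Q1 P).toLinearMap).map ((LinearMap.range (1 - P).toLinearMap)ᗮ).subtype ∧
      (LinearMap.ker (adjoint (P1 P)).toLinearMap).map (LinearMap.range P.toLinearMap).subtype =
        LinearMap.range P.toLinearMap ⊓ LinearMap.range (adjoint P).toLinearMap ∧
      (LinearMap.ker (P1 P).toLinearMap).map ((LinearMap.range P.toLinearMap)ᗮ).subtype =
        (LinearMap.ker (adjoint (Q1 P)).toLinearMap).map (LinearMap.range (1 - P).toLinearMap).subtype ∧
      (LinearMap.ker (P1 P).toLinearMap).map ((LinearMap.range P.toLinearMap)ᗮ).subtype =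
        LinearMap.ker P.toLinearMap ⊓ LinearMap.ker (adjoint P).toLinearMap) := by
  haveI : CompleteSpace (LinearMap.range P.toLinearMap) := (isClosed_range_idem P hP).completeSpace_coe
  haveI : CompleteSpace (LinearMap.range (1 - P).toLinearMap) :=
    (isClosed_range_idem (1 - P) (mul_one_sub_idem P hP)).completeSpace_coe
  have hQ : (1 - P) * (1 - P) = 1 - P := mul_one_sub_idem P hP
  have hPs := adjoint_idem P hP
  have e2 := map_ker_adjoint_P1 P hP
  have e4 := map_ker_P1 P
  -- kernel of Q1
  have e1 : (LinearMap.ker (Q1 P).toLinearMap).map ((LinearMap.range (1 - P).toLinearMap)ᗮ).subtype =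
      LinearMap.range P.toLinearMap ⊓ LinearMap.range (adjoint P).toLinearMap := by
    have := map_ker_P1 (1 - P)
    rw [show LinearMap.ker (1 - P).toLinearMap = LinearMap.range P.toLinearMap from (range_idem_eq_ker P hP).symm,
      adjoint_one_sub,
      show LinearMap.ker (1 - adjoint P).toLinearMap = LinearMap.range (adjoint P).toLinearMap from
        (range_idem_eq_ker (adjoint P) hPs).symm] at this
    exact this
  -- kernel of adjoint Q1
  have hr1 : LinearMap.range (1 - P).toLinearMap = LinearMap.ker P.toLinearMap := by
    rw [range_idem_eq_ker (1 - P) hQ, sub_sub_cancel]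
  have hr2 : LinearMap.range (adjoint (1 - P)).toLinearMap = LinearMap.ker (adjoint P).toLinearMap := by
    rw [adjoint_one_sub, range_idem_eq_ker (1 - adjoint P) (mul_one_sub_idem (adjoint P) hPs),
      sub_sub_cancel]
  have e3 : (LinearMap.ker (adjoint (Q1 P)).toLinearMap).map (LinearMap.range (1 - P).toLinearMap).subtype =
      LinearMap.ker P.toLinearMap ⊓ LinearMap.ker (adjoint P).toLinearMap :=
    (map_ker_adjoint_P1 (1 - P) hQ).trans (by rw [hr1, hr2])
  exact ⟨e2.trans e1.symm, e2, e4.trans e3.symm, e4⟩
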